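/- Define H : ℝ³ → ℝ by H(ξ) = ‖ξ‖·√(2 + ‖ξ‖²). There exists a constant C > 0 such that for every integer k with 0 ≤ k ≤ 4 and every ξ ∈ ℝ³ with ξ ≠ 0, the k-th iterated Fréchet derivative of H at ξ satisfies ‖D^k H(ξ)‖ ≤ C·√(2 + ‖ξ‖²)·‖ξ‖^{1-k}. -/

import Mathlib

open Set Topology

noncomputable section

variable {E : Type*} [NormedAddCommGroup E] [NormedSpace ℝ E]

lemma natle (n : ℕ) : (n : WithTop ℕ∞) ≤ ((⊤ : ℕ∞) : WithTop ℕ∞) := by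
  exact_mod_cast le_top

def sclE (c : ℝ) (hc : c ≠ 0) : E ≃L[ℝ] E :=
{ toLinearEquiv :=
  { toFun := fun x => c • x
    invFun := fun x => c⁻¹ • x
    map_add' := smul_add c
    map_smul' := fun a x => smul_comm c a x
    left_inv := fun x => inv_smul_smul₀ hc x
    right_inv := fun x => smul_inv_smul₀ hc x }
  continuous_toFun := continuous_const_smul c
  continuous_invFun := continuous_const_smul c⁻¹ }

@[simp] lemma sclE_apply (c : ℝ) (hc : c ≠ 0) (x : E) : sclE c hc x = c • x := rfl

lemma norm_iteratedFDeriv_homog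
    {f : E → ℝ} {d : ℤ} {n : ℕ}
    (hf : ContDiffOn ℝ (⊤ : ℕ∞) f {x : E | x ≠ 0})
    (hhom : ∀ c : ℝ, 0 < c → ∀ x : E, f (c • x) = c ^ d * f x)
    {M : ℝ} (hM : ∀ x : E, ‖x‖ = 1 →
      ‖iteratedFDerivWithin ℝ n f {x : E | x ≠ 0} x‖ ≤ M)
    {x : E} (hx : x ≠ 0) :
    ‖iteratedFDeriv ℝ n f x‖ ≤ M * ‖x‖ ^ (d - n) := by
  set s : Set E := {x : E | x ≠ 0} with hs
  have hso : IsOpen s := isOpen_ne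
  have hsu : UniqueDiffOn ℝ s := hso.uniqueDiffOn
  have hc : (0:ℝ) < ‖x‖ := norm_pos_iff.mpr hx
  set c : ℝ := ‖x‖ with hcdef
  have hc0 : c ≠ 0 := ne_of_gt hc
  have hc0' : c⁻¹ ≠ 0 := inv_ne_zero hc0
  set g := sclE (E := E) c⁻¹ hc0' with hg
  have hgpre : (g : E → E) ⁻¹' s = s := by
    ext y
    simp only [mem_preimage, mem_setOf_eq, hs, sclE_apply, ContinuousLinearEquiv.coe_coe]
    constructor
    · intro h h'; exact h (by simp [h'])
    · intro h h'; rcases smul_eq_zero.1 h' with h'' | h''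
      · exact hc0' h''
      · exact h h''
  have hgx : g x ∈ s := by
    simp only [hs, mem_setOf_eq, hg, sclE_apply]
    exact smul_ne_zero hc0' hx
  have key := g.iteratedFDerivWithin_comp_right f hsu hgx n
  rw [hgpre] at key
  have hfg : (f ∘ g) = (c⁻¹ ^ d) • f := by
    funext y
    simp only [Function.comp_apply, ContinuousLinearEquiv.coe_coe, sclE_apply, Pi.smul_apply,
      smul_eq_mul]
    exact hhom c⁻¹ (by positivity) y
  rw [hfg,
    iteratedFDerivWithin_const_smul_apply (hf.of_le (natle n) x hx) hsu (show x ∈ s from hx)] at key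
  set A := ‖iteratedFDerivWithin ℝ n f s x‖ with hA
  have hnorm := congrArg norm key
  rw [norm_smul (c⁻¹ ^ d) (iteratedFDerivWithin ℝ n f s x), Real.norm_eq_abs,
    abs_of_pos (zpow_pos (inv_pos.mpr hc) d)] at hnorm
  have hgnorm : ‖(g : E →L[ℝ] E)‖ ≤ c⁻¹ := by
    refine ContinuousLinearMap.opNorm_le_bound _ (by positivity) fun y => ?_
    have : (g : E →L[ℝ] E) y = c⁻¹ • y := rfl
    rw [this, norm_smul, Real.norm_eq_abs, abs_of_pos (by positivity)]
  have hcomp : ‖(iteratedFDerivWithin ℝ n f s (g x)).compContinuousLinearMap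
      fun _ : Fin n => (g : E →L[ℝ] E)‖ ≤ M * c⁻¹ ^ n := by
    refine le_trans (ContinuousMultilinearMap.norm_compContinuousLinearMap_le _ _) ?_
    have hMx : ‖iteratedFDerivWithin ℝ n f s (g x)‖ ≤ M := by
      refine hM _ ?_
      have : g x = c⁻¹ • x := rfl
      rw [this, norm_smul, Real.norm_eq_abs, abs_of_pos (by positivity)]
      field_simp
      exact hcdef.symm
    have hprod : (∏ _i : Fin n, ‖(g : E →L[ℝ] E)‖) ≤ c⁻¹ ^ n := by
      rw [Finset.prod_const, Finset.card_univ, Fintype.card_fin]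
      exact pow_le_pow_left₀ (norm_nonneg _) hgnorm n
    have h0M : 0 ≤ M := le_trans (norm_nonneg _) hMx
    exact mul_le_mul hMx hprod (Finset.prod_nonneg fun _ _ => norm_nonneg _) h0M
  have hstep : c⁻¹ ^ d * A ≤ M * c⁻¹ ^ n := hnorm ▸ hcomp
  have hglob : ‖iteratedFDeriv ℝ n f x‖ = A := by
    rw [hA, iteratedFDerivWithin_of_isOpen n hso (show x ∈ s from hx)]
  rw [hglob]
  have := mul_le_mul_of_nonneg_left hstep (le_of_lt (zpow_pos hc d))
  calc A = c ^ d * (c⁻¹ ^ d * A) := by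
        rw [← mul_assoc, ← mul_zpow, mul_inv_cancel₀ hc0, one_zpow, one_mul]
    _ ≤ c ^ d * (M * c⁻¹ ^ n) := this
    _ = M * c ^ (d - n) := by
        rw [zpow_sub₀ hc0, zpow_natCast, div_eq_mul_inv, inv_pow]; ring

lemma homog_bound_all [ProperSpace E] {f : E → ℝ} {d : ℤ} (n : ℕ)
    (hf : ContDiffOn ℝ (⊤ : ℕ∞) f {x : E | x ≠ 0})
    (hhom : ∀ c : ℝ, 0 < c → ∀ x : E, f (c • x) = c ^ d * f x) :
    ∃ C > 0, ∀ x : E, x ≠ 0 → ‖iteratedFDeriv ℝ n f x‖ ≤ C * ‖x‖ ^ (d - n) := by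
  set s : Set E := {x : E | x ≠ 0} with hs
  have hso : IsOpen s := isOpen_ne
  have hcont : ContinuousOn (iteratedFDerivWithin ℝ n f s) s :=
    hf.continuousOn_iteratedFDerivWithin (natle n) hso.uniqueDiffOn
  have hsub : Metric.sphere (0:E) 1 ⊆ s := by
    intro y hy
    rw [mem_sphere_zero_iff_norm] at hy
    simp only [hs, mem_setOf_eq]
    intro h; rw [h] at hy; simp at hy
  obtain ⟨M, hM⟩ := (isCompact_sphere (0:E) 1).exists_bound_of_continuousOn (hcont.mono hsub)
  refine ⟨max M 1, lt_of_lt_of_le one_pos (le_max_right _ _), fun x hx => ?_⟩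
  refine norm_iteratedFDeriv_homog hf hhom (fun y hy => ?_) hx
  exact le_trans (hM y (by rwa [mem_sphere_zero_iff_norm])) (le_max_left _ _)

/-! ### The concrete functions on `E3 = EuclideanSpace ℝ (Fin 3)` -/

abbrev E3 := EuclideanSpace ℝ (Fin 3)

def Nf : E3 → ℝ := fun x => ‖x‖
def Pf : E3 → ℝ := fun x => Real.sqrt (2 + ‖x‖ ^ 2)
def qf : E3 → ℝ := fun x => ‖x‖ ^ 2
def rf : E3 → ℝ := fun x => (‖x‖ ^ 2)⁻¹
def hf3 : E3 → ℝ := fun x => Real.sqrt (1 + 2 * (‖x‖ ^ 2)⁻¹)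

lemma contDiffOn_Nf : ContDiffOn ℝ (⊤ : ℕ∞) Nf {x : E3 | x ≠ 0} :=
  fun _x hx => (contDiffAt_norm ℝ hx).contDiffWithinAt

lemma contDiff_Pf : ContDiff ℝ (⊤ : ℕ∞) Pf := by
  refine ContDiff.sqrt ?_ (fun x => by positivity)
  exact contDiff_const.add (contDiff_norm_sq ℝ)

lemma contDiff_qf : ContDiff ℝ (⊤ : ℕ∞) qf := contDiff_norm_sq ℝ

lemma contDiffOn_rf : ContDiffOn ℝ (⊤ : ℕ∞) rf {x : E3 | x ≠ 0} :=
  (contDiff_qf.contDiffOn).inv (fun x hx => by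
    have hx0 : x ≠ 0 := hx
    exact pow_ne_zero 2 (norm_ne_zero_iff.mpr hx0))

lemma contDiffOn_hf3 : ContDiffOn ℝ (⊤ : ℕ∞) hf3 {x : E3 | x ≠ 0} := by
  refine ContDiffOn.sqrt ?_ (fun x hx => by
    have hx0 : x ≠ 0 := hx
    have h1 : (0:ℝ) < ‖x‖ ^ 2 := pow_pos (norm_pos_iff.mpr hx0) 2
    have h2 : (0:ℝ) < (‖x‖ ^ 2)⁻¹ := by positivity
    have : (0:ℝ) < 1 + 2 * (‖x‖ ^ 2)⁻¹ := by nlinarith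
    exact ne_of_gt (by simpa [rf] using this))
  exact contDiffOn_const.add (contDiffOn_const.mul contDiffOn_rf)

lemma hom_Nf : ∀ c : ℝ, 0 < c → ∀ x : E3, Nf (c • x) = c ^ (1:ℤ) * Nf x := by
  intro c hc x
  simp [Nf, norm_smul, abs_of_pos hc]

lemma hom_qf : ∀ c : ℝ, 0 < c → ∀ x : E3, qf (c • x) = c ^ (2:ℤ) * qf x := by
  intro c hc x
  have h : ‖c • x‖ = c * ‖x‖ := by rw [norm_smul, Real.norm_eq_abs, abs_of_pos hc]
  have h2 : c ^ (2:ℤ) = c ^ 2 := by rw [zpow_two, pow_two]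
  simp only [qf, h, h2]; ring

lemma hom_rf : ∀ c : ℝ, 0 < c → ∀ x : E3, rf (c • x) = c ^ (-2:ℤ) * rf x := by
  intro c hc x
  have h : ‖c • x‖ = c * ‖x‖ := by rw [norm_smul, Real.norm_eq_abs, abs_of_pos hc]
  have h2 : c ^ (-2:ℤ) = (c ^ 2)⁻¹ := by rw [zpow_neg, zpow_two, pow_two]
  simp only [rf, h, h2, mul_pow, mul_inv]

lemma Pf_bound (n : ℕ) :
    ∃ C > 0, ∀ x : E3, ‖x‖ ≤ 1 → ‖iteratedFDeriv ℝ n Pf x‖ ≤ C := by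
  have hcont : Continuous (iteratedFDeriv ℝ n Pf) :=
    contDiff_Pf.continuous_iteratedFDeriv (natle n)
  obtain ⟨M, hM⟩ :=
    (isCompact_closedBall (0:E3) 1).exists_bound_of_continuousOn hcont.continuousOn
  refine ⟨max M 1, lt_of_lt_of_le one_pos (le_max_right _ _), fun x hx => ?_⟩
  exact le_trans (hM x (by rwa [Metric.mem_closedBall, dist_zero_right])) (le_max_left _ _)

lemma hf3_bound (n : ℕ) :
    ∃ C > 0, ∀ x : E3, 1 ≤ ‖x‖ → ‖iteratedFDeriv ℝ n hf3 x‖ ≤ C * ‖x‖ ^ (-(n:ℤ)) := by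
  classical
  set t : Set ℝ := Ioi (-(1:ℝ)/4) with ht
  have hto : IsOpen t := isOpen_Ioi
  set w : ℝ → ℝ := fun y => Real.sqrt (1 + 2 * y) with hwdef
  have hw : ContDiffOn ℝ (⊤ : ℕ∞) w t := by
    refine ContDiffOn.sqrt ?_ (fun y hy => ?_)
    · exact contDiffOn_const.add (contDiffOn_const.mul contDiffOn_id)
    · have : -(1:ℝ)/4 < y := hy
      nlinarith
  have hWc : ∀ i : ℕ, ∃ M, ∀ y ∈ Icc (0:ℝ) 4, ‖iteratedFDerivWithin ℝ i w t y‖ ≤ M := by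
    intro i
    refine isCompact_Icc.exists_bound_of_continuousOn
      ((hw.continuousOn_iteratedFDerivWithin (natle i) hto.uniqueDiffOn).mono ?_)
    intro y hy
    have : (0:ℝ) ≤ y := hy.1
    show -(1:ℝ)/4 < y
    linarith
  choose Mw hMw using hWc
  set Cw : ℝ := (∑ i ∈ Finset.range (n+1), max (Mw i) 0) + 1 with hCwdef
  have hsum0 : 0 ≤ ∑ i ∈ Finset.range (n+1), max (Mw i) 0 :=
    Finset.sum_nonneg fun i _ => le_max_right _ _
  have hCw0 : 0 < Cw := by rw [hCwdef]; linarith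
  have hCwle : ∀ i ≤ n, ∀ y ∈ Icc (0:ℝ) 4, ‖iteratedFDerivWithin ℝ i w t y‖ ≤ Cw := by
    intro i hi y hy
    refine (hMw i y hy).trans ?_
    refine le_trans (le_max_left _ 0) ?_
    rw [hCwdef]
    have := Finset.single_le_sum (f := fun j => max (Mw j) 0)
      (fun j _ => le_max_right _ _) (Finset.mem_range.mpr (Nat.lt_succ_of_le hi))
    linarith
  have hrb : ∀ i : ℕ, ∃ C > 0, ∀ x : E3, x ≠ 0 →
      ‖iteratedFDeriv ℝ i rf x‖ ≤ C * ‖x‖ ^ ((-2:ℤ) - i) :=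
    fun i => homog_bound_all i contDiffOn_rf hom_rf
  choose Cr hCrpos hCr using hrb
  set B : ℝ := 1 + ∑ i ∈ Finset.range (n+1), max (Cr i) 0 with hBdef
  have hsum1 : 0 ≤ ∑ i ∈ Finset.range (n+1), max (Cr i) 0 :=
    Finset.sum_nonneg fun i _ => le_max_right _ _
  have hB1 : 1 ≤ B := by rw [hBdef]; linarith
  have hB0 : 0 < B := lt_of_lt_of_le one_pos hB1
  have hCrB : ∀ i ≤ n, Cr i ≤ B := by
    intro i hi
    refine le_trans (le_max_left _ 0) ?_
    rw [hBdef]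
    have := Finset.single_le_sum (f := fun j => max (Cr j) 0)
      (fun j _ => le_max_right _ _) (Finset.mem_range.mpr (Nat.lt_succ_of_le hi))
    linarith
  set s2 : Set E3 := {x | 1/2 < ‖x‖} with hs2
  have hs2o : IsOpen s2 := isOpen_lt continuous_const continuous_norm
  have hr2 : ContDiffOn ℝ (⊤ : ℕ∞) rf s2 := by
    refine contDiffOn_rf.mono ?_
    intro y hy
    have h1 : (1:ℝ)/2 < ‖y‖ := hy
    show y ≠ 0
    intro h; rw [h] at h1; simp at h1; linarith
  have hmaps : MapsTo rf s2 t := by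
    intro y hy
    have h1 : (1:ℝ)/2 < ‖y‖ := hy
    have h2 : (0:ℝ) < ‖y‖ ^ 2 := by nlinarith
    show -(1:ℝ)/4 < (‖y‖ ^ 2)⁻¹
    have : (0:ℝ) < (‖y‖ ^ 2)⁻¹ := by positivity
    linarith
  refine ⟨(Nat.factorial n : ℝ) * Cw * B ^ n, by positivity, fun x hx1 => ?_⟩
  have hxp : (0:ℝ) < ‖x‖ := lt_of_lt_of_le one_pos hx1
  have hx0 : x ≠ 0 := norm_pos_iff.mp hxp
  have hxs2 : x ∈ s2 := by show (1:ℝ)/2 < ‖x‖; linarith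
  rw [← iteratedFDerivWithin_of_isOpen n hs2o hxs2]
  have hfeq : hf3 = w ∘ rf := rfl
  rw [hfeq]
  have hC : ∀ i, i ≤ n → ‖iteratedFDerivWithin ℝ i w t (rf x)‖ ≤ Cw := by
    intro i hi
    refine hCwle i hi _ ⟨by show (0:ℝ) ≤ (‖x‖ ^ 2)⁻¹; positivity, ?_⟩
    have h1 : (1:ℝ) ≤ ‖x‖ ^ 2 := by nlinarith
    have := inv_le_one_of_one_le₀ h1
    show (‖x‖ ^ 2)⁻¹ ≤ 4
    linarith
  have hD : ∀ i, 1 ≤ i → i ≤ n →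
      ‖iteratedFDerivWithin ℝ i rf s2 x‖ ≤ (B / ‖x‖) ^ i := by
    intro i h1i hin
    rw [iteratedFDerivWithin_of_isOpen i hs2o hxs2]
    refine (hCr i x hx0).trans ?_
    have hxne : ‖x‖ ≠ 0 := ne_of_gt hxp
    have e1 : ‖x‖ ^ ((-2:ℤ) - i) = (‖x‖ ^ 2)⁻¹ * (‖x‖ ^ i)⁻¹ := by
      rw [zpow_sub₀ hxne, zpow_natCast, div_eq_mul_inv, zpow_neg, zpow_two, pow_two]
    have e2 : (‖x‖ ^ 2)⁻¹ ≤ 1 := inv_le_one_of_one_le₀ (by nlinarith)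
    have hz3 : ‖x‖ ^ ((-2:ℤ) - i) ≤ (‖x‖ ^ i)⁻¹ := by
      rw [e1]
      have hp : (0:ℝ) ≤ (‖x‖ ^ i)⁻¹ := by positivity
      nlinarith
    have hz4 : Cr i ≤ B ^ i := (hCrB i hin).trans (le_self_pow₀ hB1 (by omega))
    have : Cr i * ‖x‖ ^ ((-2:ℤ) - i) ≤ B ^ i * (‖x‖ ^ i)⁻¹ := by
      refine mul_le_mul hz4 hz3 ?_ ?_
      · positivity
      · positivity
    refine this.trans (le_of_eq ?_)
    rw [div_pow, div_eq_mul_inv]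
  refine le_trans (norm_iteratedFDerivWithin_comp_le hw hr2 (natle n) hto.uniqueDiffOn
    hs2o.uniqueDiffOn hmaps hxs2 hC hD) (le_of_eq ?_)
  have h : ‖x‖ ^ (-(n:ℤ)) = (‖x‖ ^ n)⁻¹ := by rw [zpow_neg, zpow_natCast]
  rw [h, div_pow, div_eq_mul_inv]
  ring

lemma main_bound (H : E3 → ℝ)
    (hH : ∀ ξ : E3, H ξ = ‖ξ‖ * Real.sqrt (2 + ‖ξ‖ ^ 2)) (k : ℕ) :
    ∃ C > 0, ∀ ξ : E3, ξ ≠ 0 →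
      ‖iteratedFDeriv ℝ k H ξ‖ ≤ C * Real.sqrt (2 + ‖ξ‖ ^ 2) * ‖ξ‖ ^ ((1:ℤ) - k) := by
  classical
  have hNb : ∀ i : ℕ, ∃ C > 0, ∀ x : E3, x ≠ 0 →
      ‖iteratedFDeriv ℝ i Nf x‖ ≤ C * ‖x‖ ^ ((1:ℤ) - i) :=
    fun i => homog_bound_all i contDiffOn_Nf hom_Nf
  choose CN hCNpos hCN using hNb
  have hqb : ∀ i : ℕ, ∃ C > 0, ∀ x : E3, x ≠ 0 →
      ‖iteratedFDeriv ℝ i qf x‖ ≤ C * ‖x‖ ^ ((2:ℤ) - i) :=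
    fun i => homog_bound_all i contDiff_qf.contDiffOn hom_qf
  choose Cq hCqpos hCq using hqb
  choose CP hCPpos hCP using Pf_bound
  choose Ch hChpos hCh using hf3_bound
  set C1 : ℝ := ∑ i ∈ Finset.range (k+1), (k.choose i : ℝ) * CN i * CP (k - i) with hC1def
  set C2 : ℝ := ∑ i ∈ Finset.range (k+1), (k.choose i : ℝ) * Cq i * Ch (k - i) with hC2def
  have hC1nn : 0 ≤ C1 := Finset.sum_nonneg fun i _ => by
    have := (hCNpos i).le; have := (hCPpos (k-i)).le; positivity
  have hC2nn : 0 ≤ C2 := Finset.sum_nonneg fun i _ => by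
    have := (hCqpos i).le; have := (hChpos (k-i)).le; positivity
  set C : ℝ := C1 + C2 + 1 with hCdef
  have hCpos : 0 < C := by rw [hCdef]; linarith
  have hC1C : C1 ≤ C := by rw [hCdef]; linarith
  have hC2C : C2 ≤ C := by rw [hCdef]; linarith
  refine ⟨C, hCpos, fun ξ hξ => ?_⟩
  set s : Set E3 := {x : E3 | x ≠ 0} with hsdef
  have hso : IsOpen s := isOpen_ne
  have hsu : UniqueDiffOn ℝ s := hso.uniqueDiffOn
  have hξs : ξ ∈ s := hξ
  have hxp : (0:ℝ) < ‖ξ‖ := norm_pos_iff.mpr hξ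
  have hsq2 : (1:ℝ) ≤ Real.sqrt (2 + ‖ξ‖ ^ 2) := by
    rw [show (1:ℝ) = Real.sqrt 1 from Real.sqrt_one.symm]
    exact Real.sqrt_le_sqrt (by nlinarith)
  have hsq0 : (0:ℝ) ≤ Real.sqrt (2 + ‖ξ‖ ^ 2) := Real.sqrt_nonneg _
  have hzpos : (0:ℝ) < ‖ξ‖ ^ ((1:ℤ) - k) := zpow_pos hxp _
  rcases le_or_gt ‖ξ‖ 1 with hle | hgt
  · -- small regime : H = Nf * Pf
    have hEq : EqOn H (fun y => Nf y * Pf y) s := fun y _ => by rw [hH y]; rfl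
    have step1 : ‖iteratedFDeriv ℝ k H ξ‖ =
        ‖iteratedFDerivWithin ℝ k (fun y => Nf y * Pf y) s ξ‖ := by
      rw [← iteratedFDerivWithin_of_isOpen k hso hξs, iteratedFDerivWithin_congr hEq hξs]
    rw [step1]
    refine le_trans (norm_iteratedFDerivWithin_mul_le contDiffOn_Nf
      contDiff_Pf.contDiffOn hsu hξs (natle k)) ?_
    have hterm : ∀ i ∈ Finset.range (k+1),
        (k.choose i : ℝ) * ‖iteratedFDerivWithin ℝ i Nf s ξ‖ *
          ‖iteratedFDerivWithin ℝ (k-i) Pf s ξ‖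
        ≤ ((k.choose i : ℝ) * CN i * CP (k-i)) * ‖ξ‖ ^ ((1:ℤ) - k) := by
      intro i hi
      have hik : i ≤ k := Nat.lt_succ_iff.mp (Finset.mem_range.mp hi)
      rw [iteratedFDerivWithin_of_isOpen i hso hξs,
        iteratedFDerivWithin_of_isOpen (k-i) hso hξs]
      have h1 : ‖iteratedFDeriv ℝ i Nf ξ‖ ≤ CN i * ‖ξ‖ ^ ((1:ℤ) - i) := hCN i ξ hξ
      have h2 : ‖iteratedFDeriv ℝ (k-i) Pf ξ‖ ≤ CP (k-i) := hCP (k-i) ξ hle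
      have h3 : ‖ξ‖ ^ ((1:ℤ) - i) ≤ ‖ξ‖ ^ ((1:ℤ) - k) :=
        zpow_le_zpow_right_of_le_one₀ hxp hle (by omega)
      have hCNi := (hCNpos i).le
      have hCPi := (hCPpos (k-i)).le
      calc (k.choose i : ℝ) * ‖iteratedFDeriv ℝ i Nf ξ‖ * ‖iteratedFDeriv ℝ (k-i) Pf ξ‖
          ≤ (k.choose i : ℝ) * (CN i * ‖ξ‖ ^ ((1:ℤ) - i)) * CP (k-i) := by
            refine mul_le_mul (mul_le_mul_of_nonneg_left h1 (by positivity)) h2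
              (norm_nonneg _) (by positivity)
        _ = ((k.choose i : ℝ) * CN i * CP (k-i)) * ‖ξ‖ ^ ((1:ℤ) - i) := by ring
        _ ≤ ((k.choose i : ℝ) * CN i * CP (k-i)) * ‖ξ‖ ^ ((1:ℤ) - k) := by
            refine mul_le_mul_of_nonneg_left h3 (by positivity)
    refine le_trans (Finset.sum_le_sum hterm) ?_
    rw [← Finset.sum_mul, ← hC1def]
    calc C1 * ‖ξ‖ ^ ((1:ℤ) - k) ≤ (C * Real.sqrt (2 + ‖ξ‖ ^ 2)) * ‖ξ‖ ^ ((1:ℤ) - k) := by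
          refine mul_le_mul_of_nonneg_right ?_ hzpos.le
          calc C1 ≤ C := hC1C
            _ = C * 1 := (mul_one C).symm
            _ ≤ C * Real.sqrt (2 + ‖ξ‖ ^ 2) := mul_le_mul_of_nonneg_left hsq2 hCpos.le
      _ = C * Real.sqrt (2 + ‖ξ‖ ^ 2) * ‖ξ‖ ^ ((1:ℤ) - k) := by ring
  · -- large regime : H = qf * hf3
    have hge : (1:ℝ) ≤ ‖ξ‖ := hgt.le
    have hEq : EqOn H (fun y => qf y * hf3 y) s := by
      intro y hy
      have hy0 : y ≠ 0 := hy
      have hyp : (0:ℝ) < ‖y‖ := norm_pos_iff.mpr hy0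
      have hy2 : (0:ℝ) < ‖y‖ ^ 2 := by positivity
      rw [hH y]
      show ‖y‖ * Real.sqrt (2 + ‖y‖ ^ 2) = ‖y‖ ^ 2 * Real.sqrt (1 + 2 * (‖y‖ ^ 2)⁻¹)
      have h1 : 1 + 2 * (‖y‖ ^ 2)⁻¹ = (2 + ‖y‖ ^ 2) / ‖y‖ ^ 2 := by
        field_simp
        ring
      rw [h1, Real.sqrt_div (by positivity : (0:ℝ) ≤ 2 + ‖y‖ ^ 2),
        Real.sqrt_sq (norm_nonneg y)]
      field_simp
    have step1 : ‖iteratedFDeriv ℝ k H ξ‖ =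
        ‖iteratedFDerivWithin ℝ k (fun y => qf y * hf3 y) s ξ‖ := by
      rw [← iteratedFDerivWithin_of_isOpen k hso hξs, iteratedFDerivWithin_congr hEq hξs]
    rw [step1]
    refine le_trans (norm_iteratedFDerivWithin_mul_le contDiff_qf.contDiffOn
      contDiffOn_hf3 hsu hξs (natle k)) ?_
    have hterm : ∀ i ∈ Finset.range (k+1),
        (k.choose i : ℝ) * ‖iteratedFDerivWithin ℝ i qf s ξ‖ *
          ‖iteratedFDerivWithin ℝ (k-i) hf3 s ξ‖
        ≤ ((k.choose i : ℝ) * Cq i * Ch (k-i)) * ‖ξ‖ ^ ((2:ℤ) - k) := by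
      intro i hi
      have hik : i ≤ k := Nat.lt_succ_iff.mp (Finset.mem_range.mp hi)
      rw [iteratedFDerivWithin_of_isOpen i hso hξs,
        iteratedFDerivWithin_of_isOpen (k-i) hso hξs]
      have h1 : ‖iteratedFDeriv ℝ i qf ξ‖ ≤ Cq i * ‖ξ‖ ^ ((2:ℤ) - i) := hCq i ξ hξ
      have h2 : ‖iteratedFDeriv ℝ (k-i) hf3 ξ‖ ≤ Ch (k-i) * ‖ξ‖ ^ (-((k-i : ℕ):ℤ)) :=
        hCh (k-i) ξ hge
      have hmul : ‖ξ‖ ^ ((2:ℤ) - i) * ‖ξ‖ ^ (-((k-i : ℕ):ℤ)) = ‖ξ‖ ^ ((2:ℤ) - k) := by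
        rw [← zpow_add₀ (ne_of_gt hxp)]
        congr 1
        omega
      have hCqi := (hCqpos i).le
      have hChi := (hChpos (k-i)).le
      calc (k.choose i : ℝ) * ‖iteratedFDeriv ℝ i qf ξ‖ * ‖iteratedFDeriv ℝ (k-i) hf3 ξ‖
          ≤ (k.choose i : ℝ) * (Cq i * ‖ξ‖ ^ ((2:ℤ) - i)) *
              (Ch (k-i) * ‖ξ‖ ^ (-((k-i : ℕ):ℤ))) := by
            refine mul_le_mul (mul_le_mul_of_nonneg_left h1 (by positivity)) h2
              (norm_nonneg _) (by positivity)
        _ = ((k.choose i : ℝ) * Cq i * Ch (k-i)) *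
              (‖ξ‖ ^ ((2:ℤ) - i) * ‖ξ‖ ^ (-((k-i : ℕ):ℤ))) := by ring
        _ = ((k.choose i : ℝ) * Cq i * Ch (k-i)) * ‖ξ‖ ^ ((2:ℤ) - k) := by rw [hmul]
    refine le_trans (Finset.sum_le_sum hterm) ?_
    rw [← Finset.sum_mul, ← hC2def]
    have hxle : ‖ξ‖ ≤ Real.sqrt (2 + ‖ξ‖ ^ 2) := by
      have h := Real.sqrt_le_sqrt (show ‖ξ‖ ^ 2 ≤ 2 + ‖ξ‖ ^ 2 by linarith)
      rwa [Real.sqrt_sq (norm_nonneg ξ)] at h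
    have hsplit : ‖ξ‖ ^ ((2:ℤ) - k) = ‖ξ‖ * ‖ξ‖ ^ ((1:ℤ) - k) := by
      rw [show ((2:ℤ) - k) = 1 + (1 - k) by ring, zpow_add₀ (ne_of_gt hxp), zpow_one]
    rw [hsplit]
    calc C2 * (‖ξ‖ * ‖ξ‖ ^ ((1:ℤ) - k)) = (C2 * ‖ξ‖) * ‖ξ‖ ^ ((1:ℤ) - k) := by ring
      _ ≤ (C * Real.sqrt (2 + ‖ξ‖ ^ 2)) * ‖ξ‖ ^ ((1:ℤ) - k) := by
          refine mul_le_mul_of_nonneg_right ?_ hzpos.le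
          exact mul_le_mul hC2C hxle (norm_nonneg ξ) hCpos.le
      _ = C * Real.sqrt (2 + ‖ξ‖ ^ 2) * ‖ξ‖ ^ ((1:ℤ) - k) := by ring

/-- For `H(ξ) = ‖ξ‖·√(2 + ‖ξ‖²)` on `ℝ³`, there is `C > 0` such that for `0 ≤ k ≤ 4`
and `ξ ≠ 0`, `‖D^k H(ξ)‖ ≤ C·√(2 + ‖ξ‖²)·‖ξ‖^{1-k}`. -/
theorem stmt_4 (H : EuclideanSpace ℝ (Fin 3) → ℝ)
    (hH : ∀ ξ : EuclideanSpace ℝ (Fin 3), H ξ = ‖ξ‖ * Real.sqrt (2 + ‖ξ‖ ^ 2)) :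
    ∃ C > 0, ∀ k : ℕ, k ≤ 4 → ∀ ξ : EuclideanSpace ℝ (Fin 3), ξ ≠ 0 →
      ‖iteratedFDeriv ℝ k H ξ‖ ≤ C * Real.sqrt (2 + ‖ξ‖ ^ 2) * ‖ξ‖ ^ ((1 : ℝ) - k) := by
  have key := main_bound H hH
  choose Cf hCfpos hCf using key
  refine ⟨∑ i ∈ Finset.range 5, Cf i, ?_, ?_⟩
  · exact Finset.sum_pos (fun i _ => hCfpos i) ⟨0, by simp⟩
  · intro k hk ξ hξ
    have h1 := hCf k ξ hξ
    have hCle : Cf k ≤ ∑ i ∈ Finset.range 5, Cf i :=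
      Finset.single_le_sum (fun i _ => (hCfpos i).le) (Finset.mem_range.mpr (by omega))
    have hexp : ((1:ℝ) - (k:ℝ)) = (((1:ℤ) - k : ℤ) : ℝ) := by push_cast; ring
    rw [hexp, Real.rpow_intCast]
    have hsq0 : (0:ℝ) ≤ Real.sqrt (2 + ‖ξ‖ ^ 2) := Real.sqrt_nonneg _
    have hz : (0:ℝ) ≤ ‖ξ‖ ^ ((1:ℤ) - k) := (zpow_pos (norm_pos_iff.mpr hξ) _).le
    exact h1.trans (mul_le_mul_of_nonneg_right
      (mul_le_mul_of_nonneg_right hCle hsq0) hz)
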